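/- Let p : {1,…,m} → [0,1] with ∑_j p(j) = k ∈ ℕ, k ≤ m. Then there exists a probability distribution σ over k-element subsets of {1,…,m} such that for each j, ∑_{D : j ∈ D} σ(D) = p(j). -/

import Mathlib

private lemma ms_aux : ∀ (t : ℕ) (m k : ℕ) (p : Fin m → ℝ),
    (∀ j, 0 ≤ p j) → (∀ j, p j ≤ 1) → (∑ j, p j = (k : ℝ)) →
    (Finset.univ.filter (fun j => p j ≠ 0 ∧ p j ≠ 1)).card ≤ t →
    ∃ σ : Finset (Fin m) → ℝ,
      (∀ D, 0 ≤ σ D) ∧ (∀ D, σ D ≠ 0 → D.card = k) ∧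
      (∑ D : Finset (Fin m), σ D = 1) ∧
      (∀ j, ∑ D ∈ Finset.univ.filter (fun D : Finset (Fin m) => j ∈ D), σ D = p j) := by
  intro t
  induction t with
  | zero =>
    intro m k p hp0 hp1 hsum hF
    -- all coordinates are 0 or 1
    have hint : ∀ j, p j = 0 ∨ p j = 1 := by
      intro j
      by_contra h
      push_neg at h
      have : j ∈ Finset.univ.filter (fun j => p j ≠ 0 ∧ p j ≠ 1) := by
        simp [h.1, h.2]
      have := Finset.card_pos.mpr ⟨j, this⟩
      omega
    set D₀ : Finset (Fin m) := Finset.univ.filter (fun j => p j = 1) with hD₀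
    have hsum' : ∑ j, p j = (D₀.card : ℝ) := by
      rw [hD₀, Finset.card_filter]
      push_cast
      refine Finset.sum_congr rfl fun j _ => ?_
      rcases hint j with h0 | h1
      · simp [h0]
      · simp [h1]
    have hcard : D₀.card = k := by
      have : (D₀.card : ℝ) = (k : ℝ) := by rw [← hsum', hsum]
      exact_mod_cast this
    refine ⟨fun D => if D = D₀ then 1 else 0, ?_, ?_, ?_, ?_⟩
    · intro D; dsimp only; split <;> norm_num
    · intro D hD
      by_cases h : D = D₀
      · rw [h, hcard]
      · simp [h] at hD
    · simp
    · intro j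
      rw [Finset.sum_ite_eq' _ D₀]
      have hmem : D₀ ∈ Finset.univ.filter (fun D : Finset (Fin m) => j ∈ D) ↔ j ∈ D₀ := by
        simp
      rcases hint j with h0 | h1
      · have : j ∉ D₀ := by simp [hD₀, h0]
        simp [hmem, this, h0]
      · have : j ∈ D₀ := by simp [hD₀, h1]
        simp [hmem, this, h1]
  | succ t ih =>
    intro m k p hp0 hp1 hsum hF
    by_cases hle : (Finset.univ.filter (fun j => p j ≠ 0 ∧ p j ≠ 1)).card ≤ t
    · exact ih m k p hp0 hp1 hsum hle
    · -- at least one fractional coordinate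
      push_neg at hle
      obtain ⟨i, hi⟩ := Finset.card_pos.mp (Nat.lt_of_le_of_lt (Nat.zero_le t) hle)
      simp only [Finset.mem_filter, Finset.mem_univ, true_and] at hi
      have hi0 : 0 < p i := lt_of_le_of_ne (hp0 i) (Ne.symm hi.1)
      have hi1 : p i < 1 := lt_of_le_of_ne (hp1 i) hi.2
      -- there is a second fractional coordinate
      have hj : ∃ j, j ≠ i ∧ p j ≠ 0 ∧ p j ≠ 1 := by
        by_contra h
        push_neg at h
        have hint : ∀ x, x ≠ i → p x = 0 ∨ p x = 1 := by
          intro x hx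
          by_contra hc
          push_neg at hc
          exact hc.2 (h x hx hc.1)
        have hsplit : ∑ x, p x = p i + ∑ x ∈ Finset.univ.erase i, p x :=
          (Finset.add_sum_erase _ _ (Finset.mem_univ i)).symm
        set n := ((Finset.univ.erase i).filter (fun x => p x = 1)).card with hn
        have herase : ∑ x ∈ Finset.univ.erase i, p x = (n : ℝ) := by
          rw [hn, Finset.card_filter]
          push_cast
          refine Finset.sum_congr rfl fun x hx => ?_
          rcases hint x (Finset.ne_of_mem_erase hx) with h0 | h1
          · simp [h0]
          · simp [h1]
        have hpi : p i = (k : ℝ) - (n : ℝ) := by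
          rw [hsplit, herase] at hsum; linarith
        have h1 : (n : ℝ) < (k : ℝ) := by linarith
        have h2 : (k : ℝ) < (n : ℝ) + 1 := by linarith
        have h1' : n < k := by exact_mod_cast h1
        have h2' : k < n + 1 := by exact_mod_cast h2
        omega
      obtain ⟨j, hji, hj0, hj1⟩ := hj
      have hj0' : 0 < p j := lt_of_le_of_ne (hp0 j) (Ne.symm hj0)
      have hj1' : p j < 1 := lt_of_le_of_ne (hp1 j) hj1
      set ε := min (p i) (1 - p j) with hε
      set δ := min (1 - p i) (p j) with hδ
      have hεpos : 0 < ε := lt_min hi0 (by linarith)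
      have hδpos : 0 < δ := lt_min (by linarith) hj0'
      have hεδ : 0 < ε + δ := by linarith
      -- the perturbed vector
      set q : ℝ → Fin m → ℝ := fun c x => if x = i then p i - c else if x = j then p j + c else p x
        with hq
      have hij : i ≠ j := Ne.symm hji
      have hqi : ∀ c, q c i = p i - c := by intro c; simp [hq]
      have hqj : ∀ c, q c j = p j + c := by intro c; simp [hq, hji]
      have hqo : ∀ c x, x ≠ i → x ≠ j → q c x = p x := by
        intro c x h1 h2; simp [hq, h1, h2]
      have hqsum : ∀ c, ∑ x, q c x = (k : ℝ) := by
        intro c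
        have : ∑ x, q c x = ∑ x, (p x + ((if x = i then -c else 0) + (if x = j then c else 0))) := by
          refine Finset.sum_congr rfl fun x _ => ?_
          by_cases hxi : x = i
          · subst hxi; rw [hqi, if_pos rfl, if_neg hij]; ring
          · by_cases hxj : x = j
            · subst hxj; rw [hqj, if_neg hxi, if_pos rfl]; ring
            · rw [hqo c x hxi hxj, if_neg hxi, if_neg hxj]; ring
        rw [this, Finset.sum_add_distrib, Finset.sum_add_distrib, hsum,
          Finset.sum_ite_eq' Finset.univ i, Finset.sum_ite_eq' Finset.univ j]
        simp
      have hεi : ε ≤ p i := min_le_left _ _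
      have hεj : ε ≤ 1 - p j := min_le_right _ _
      have hδi : δ ≤ 1 - p i := min_le_left _ _
      have hδj : δ ≤ p j := min_le_right _ _
      have hε0 : ∀ x, 0 ≤ q ε x := by
        intro x
        by_cases hxi : x = i
        · subst hxi; rw [hqi]; linarith
        · by_cases hxj : x = j
          · subst hxj; rw [hqj]; linarith
          · rw [hqo ε x hxi hxj]; exact hp0 x
      have hε1 : ∀ x, q ε x ≤ 1 := by
        intro x
        by_cases hxi : x = i
        · subst hxi; rw [hqi]; linarith [hp1 x]
        · by_cases hxj : x = j
          · subst hxj; rw [hqj]; linarith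
          · rw [hqo ε x hxi hxj]; exact hp1 x
      have hδ0 : ∀ x, 0 ≤ q (-δ) x := by
        intro x
        by_cases hxi : x = i
        · subst hxi; rw [hqi]; linarith
        · by_cases hxj : x = j
          · subst hxj; rw [hqj]; linarith
          · rw [hqo (-δ) x hxi hxj]; exact hp0 x
      have hδ1 : ∀ x, q (-δ) x ≤ 1 := by
        intro x
        by_cases hxi : x = i
        · subst hxi; rw [hqi]; linarith
        · by_cases hxj : x = j
          · subst hxj; rw [hqj]; linarith [hp1 x]
          · rw [hqo (-δ) x hxi hxj]; exact hp1 x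
      have hcard : ∀ c : ℝ, (∃ w : Fin m, (w = i ∨ w = j) ∧ (q c w = 0 ∨ q c w = 1)) →
          (Finset.univ.filter (fun x => q c x ≠ 0 ∧ q c x ≠ 1)).card ≤ t := by
        intro c ⟨w, hw, hwv⟩
        have hwF : w ∈ Finset.univ.filter (fun x => p x ≠ 0 ∧ p x ≠ 1) := by
          rcases hw with rfl | rfl
          · simp [hi.1, hi.2]
          · simp [hj0, hj1]
        have hsub : Finset.univ.filter (fun x => q c x ≠ 0 ∧ q c x ≠ 1) ⊆
            (Finset.univ.filter (fun x => p x ≠ 0 ∧ p x ≠ 1)).erase w := by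
          intro x hx
          simp only [Finset.mem_filter, Finset.mem_univ, true_and] at hx
          have hxw : x ≠ w := by
            rintro rfl
            rcases hwv with h | h
            · exact hx.1 h
            · exact hx.2 h
          refine Finset.mem_erase.mpr ⟨hxw, ?_⟩
          simp only [Finset.mem_filter, Finset.mem_univ, true_and]
          by_cases hxi : x = i
          · subst hxi; exact hi
          · by_cases hxj : x = j
            · subst hxj; exact ⟨hj0, hj1⟩
            · rw [hqo c x hxi hxj] at hx; exact hx
        have := Finset.card_le_card hsub
        rw [Finset.card_erase_of_mem hwF] at this
        omega
      have hεcard : (Finset.univ.filter (fun x => q ε x ≠ 0 ∧ q ε x ≠ 1)).card ≤ t := by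
        apply hcard
        rcases min_cases (p i) (1 - p j) with ⟨h, _⟩ | ⟨h, _⟩
        · refine ⟨i, Or.inl rfl, Or.inl ?_⟩
          rw [hqi, hε, h]; ring
        · refine ⟨j, Or.inr rfl, Or.inr ?_⟩
          rw [hqj, hε, h]; ring
      have hδcard : (Finset.univ.filter (fun x => q (-δ) x ≠ 0 ∧ q (-δ) x ≠ 1)).card ≤ t := by
        apply hcard
        rcases min_cases (1 - p i) (p j) with ⟨h, _⟩ | ⟨h, _⟩
        · refine ⟨i, Or.inl rfl, Or.inr ?_⟩
          rw [hqi, hδ, h]; ring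
        · refine ⟨j, Or.inr rfl, Or.inl ?_⟩
          rw [hqj, hδ, h]; ring
      obtain ⟨σ₁, hσ₁0, hσ₁k, hσ₁s, hσ₁m⟩ := ih m k (q ε) hε0 hε1 (hqsum ε) hεcard
      obtain ⟨σ₂, hσ₂0, hσ₂k, hσ₂s, hσ₂m⟩ := ih m k (q (-δ)) hδ0 hδ1 (hqsum (-δ)) hδcard
      set a := δ / (ε + δ) with ha
      set b := ε / (ε + δ) with hb
      have hne : ε + δ ≠ 0 := ne_of_gt hεδ
      have hab : a + b = 1 := by
        rw [ha, hb, ← add_div, add_comm δ ε, div_self hne]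
      have ha0 : 0 ≤ a := div_nonneg hδpos.le hεδ.le
      have hb0 : 0 ≤ b := div_nonneg hεpos.le hεδ.le
      refine ⟨fun D => a * σ₁ D + b * σ₂ D, ?_, ?_, ?_, ?_⟩
      · intro D
        exact add_nonneg (mul_nonneg ha0 (hσ₁0 D)) (mul_nonneg hb0 (hσ₂0 D))
      · intro D hD
        by_cases h1 : σ₁ D ≠ 0
        · exact hσ₁k D h1
        · by_cases h2 : σ₂ D ≠ 0
          · exact hσ₂k D h2
          · push_neg at h1 h2
            simp [h1, h2] at hD
      · rw [Finset.sum_add_distrib, ← Finset.mul_sum, ← Finset.mul_sum, hσ₁s, hσ₂s]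
        simpa using hab
      · intro x
        rw [Finset.sum_add_distrib, ← Finset.mul_sum, ← Finset.mul_sum, hσ₁m x, hσ₂m x]
        by_cases hxi : x = i
        · subst hxi
          rw [hqi, hqi, ha, hb]
          field_simp
          ring
        · by_cases hxj : x = j
          · subst hxj
            rw [hqj, hqj, ha, hb]
            field_simp
            ring
          · rw [hqo ε x hxi hxj, hqo (-δ) x hxi hxj, ← add_mul, hab, one_mul]

theorem mixed_strategy_exists (m k : ℕ) (hk : k ≤ m) (p : Fin m → ℝ)
    (hp0 : ∀ j, 0 ≤ p j) (hp1 : ∀ j, p j ≤ 1)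
    (hsum : ∑ j, p j = (k : ℝ)) :
    ∃ σ : Finset (Fin m) → ℝ,
      (∀ D, 0 ≤ σ D) ∧
      (∀ D, σ D ≠ 0 → D.card = k) ∧
      (∑ D : Finset (Fin m), σ D = 1) ∧
      (∀ j, ∑ D ∈ Finset.univ.filter (fun D : Finset (Fin m) => j ∈ D), σ D = p j) := by
  exact ms_aux (Finset.univ.filter (fun j => p j ≠ 0 ∧ p j ≠ 1)).card m k p hp0 hp1 hsum le_rfl
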